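/- Under the GUCB policy with exploration rate ν_n ≥ 4γ̄² log n, for each suboptimal system k ≠ k* the expected number of pulls satisfies E[T_k(n)] ≤ 8ν_n/Δ_k² + 5, where Δ_k = μ* − μ_k > 0 and γ̄ = max_k γ_k. -/

import Mathlib

open MeasureTheory ProbabilityTheory Finset

lemma my_precomp {Ω ι κ : Type*} [MeasurableSpace Ω] {P : Measure Ω}
    {f : ι → Ω → ℝ} (h : iIndepFun f P)
    (g : κ → ι) (hg : Function.Injective g) :
    iIndepFun (fun j => f (g j)) P := by
  rw [iIndepFun_iff_measure_inter_preimage_eq_mul] at h ⊢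
  intro S sets H
  classical
  have key := h (S.image g) (sets := Function.extend g sets fun _ => Set.univ) ?_
  · have h1 : (⋂ i ∈ S.image g, f i ⁻¹' Function.extend g sets (fun _ => Set.univ) i)
        = ⋂ j ∈ S, f (g j) ⁻¹' sets j := by
      ext ω
      simp only [Set.mem_iInter, Finset.mem_image, forall_exists_index, and_imp]
      constructor
      · intro hmem j hj
        have := hmem (g j) j hj rfl
        rwa [hg.extend_apply] at this
      · rintro hmem i j hj rfl
        rw [hg.extend_apply]
        exact hmem j hj
    have h2 : (∏ i ∈ S.image g, P (f i ⁻¹' Function.extend g sets (fun _ => Set.univ) i))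
        = ∏ j ∈ S, P (f (g j) ⁻¹' sets j) := by
      rw [Finset.prod_image (fun a _ b _ hab => hg hab)]
      refine Finset.prod_congr rfl fun j hj => ?_
      rw [hg.extend_apply]
    rw [h1, h2] at key
    exact key
  · intro i hi
    rcases Finset.mem_image.mp hi with ⟨j, hj, rfl⟩
    rw [hg.extend_apply]
    exact H j hj


lemma my_chernoff {Ω : Type*} [MeasurableSpace Ω] (P : Measure Ω) [IsProbabilityMeasure P]
    (Y : ℕ → Ω → ℝ) (γ : ℝ) (hγ : 0 < γ)
    (hind : iIndepFun Y P)
    (hYmeas : ∀ j, Measurable (Y j))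
    (hsub : ∀ j, ∀ lam : ℝ, ∫⁻ ω, ENNReal.ofReal (Real.exp (lam * Y j ω)) ∂P ≤
        ENNReal.ofReal (Real.exp (γ ^ 2 * lam ^ 2 / 2)))
    (m : ℕ) (ε : ℝ) (hε : 0 ≤ ε) :
    (P {ω | (m : ℝ) * ε ≤ ∑ j ∈ Finset.range m, Y j ω}).toReal ≤
      Real.exp (-((m : ℝ) * ε ^ 2) / (2 * γ ^ 2)) := by
  set lam : ℝ := ε / γ ^ 2 with hlam
  have hγ2 : (0:ℝ) < γ ^ 2 := by positivity
  have hlam0 : 0 ≤ lam := by positivity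
  -- integrability of exp(lam * Y j)
  have hintexp : ∀ (l : ℝ) j, Integrable (fun ω => Real.exp (l * Y j ω)) P := by
    intro l j
    refine ⟨(((hYmeas j).const_mul l).exp).aestronglyMeasurable, ?_⟩
    rw [HasFiniteIntegral]
    calc ∫⁻ ω, ‖Real.exp (l * Y j ω)‖₊ ∂P
        = ∫⁻ ω, ENNReal.ofReal (Real.exp (l * Y j ω)) ∂P := by
          refine lintegral_congr fun ω => ?_
          exact Real.enorm_eq_ofReal (Real.exp_pos _).le
      _ ≤ ENNReal.ofReal (Real.exp (γ ^ 2 * l ^ 2 / 2)) := hsub j l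
      _ < ⊤ := ENNReal.ofReal_lt_top
  -- mgf bound
  have hmgf : ∀ j, mgf (Y j) P lam ≤ Real.exp (γ ^ 2 * lam ^ 2 / 2) := by
    intro j
    rw [mgf]
    rw [integral_eq_lintegral_of_nonneg_ae (Filter.Eventually.of_forall fun ω => (Real.exp_pos _).le)
      (((hYmeas j).const_mul lam).exp).aestronglyMeasurable]
    rw [← ENNReal.toReal_ofReal (Real.exp_pos (γ ^ 2 * lam ^ 2 / 2)).le]
    exact ENNReal.toReal_mono ENNReal.ofReal_ne_top (hsub j lam)
  have hmgfsum : mgf (∑ j ∈ Finset.range m, Y j) P lam ≤ Real.exp ((m:ℝ) * (γ ^ 2 * lam ^ 2 / 2)) := by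
    rw [hind.mgf_sum hYmeas]
    calc ∏ j ∈ Finset.range m, mgf (Y j) P lam
        ≤ ∏ _j ∈ Finset.range m, Real.exp (γ ^ 2 * lam ^ 2 / 2) :=
          Finset.prod_le_prod (fun j _ => mgf_nonneg) (fun j _ => hmgf j)
      _ = Real.exp ((m:ℝ) * (γ ^ 2 * lam ^ 2 / 2)) := by
          rw [Finset.prod_const, ← Real.exp_nat_mul]
          simp [Finset.card_range]
  have key := measure_ge_le_exp_mul_mgf (X := ∑ j ∈ Finset.range m, Y j) (μ := P)
      ((m : ℝ) * ε) hlam0 ?_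
  · have hset : {ω | (m : ℝ) * ε ≤ ∑ j ∈ Finset.range m, Y j ω}
        = {ω | (m : ℝ) * ε ≤ (∑ j ∈ Finset.range m, Y j) ω} := by
      ext ω; simp [Finset.sum_apply]
    rw [hset]
    refine key.trans ?_
    calc Real.exp (-lam * ((m:ℝ) * ε)) * mgf (∑ j ∈ Finset.range m, Y j) P lam
        ≤ Real.exp (-lam * ((m:ℝ) * ε)) * Real.exp ((m:ℝ) * (γ ^ 2 * lam ^ 2 / 2)) := by
          exact mul_le_mul_of_nonneg_left hmgfsum (Real.exp_pos _).le
      _ = Real.exp (-lam * ((m:ℝ) * ε) + (m:ℝ) * (γ ^ 2 * lam ^ 2 / 2)) := (Real.exp_add _ _).symm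
      _ = Real.exp (-((m : ℝ) * ε ^ 2) / (2 * γ ^ 2)) := by
          congr 1
          have h0 : γ ^ 2 ≠ 0 := hγ2.ne'
          rw [hlam]
          field_simp
          ring
  · exact hind.integrable_exp_mul_sum hYmeas (fun j _ => hintexp lam j)

lemma my_dev {Ω : Type*} [MeasurableSpace Ω] (P : Measure Ω) [IsProbabilityMeasure P]
    (Y : ℕ → Ω → ℝ) (γ0 γb : ℝ) (hγ0 : 0 < γ0) (hγb : γ0 ≤ γb)
    (hind : iIndepFun Y P)
    (hYmeas : ∀ j, Measurable (Y j))
    (hsub : ∀ j, ∀ lam : ℝ, ∫⁻ ω, ENNReal.ofReal (Real.exp (lam * Y j ω)) ∂P ≤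
        ENNReal.ofReal (Real.exp (γ0 ^ 2 * lam ^ 2 / 2)))
    (m t : ℕ) (hm : 1 ≤ m) (νt : ℝ) (hνt : 4 * γb ^ 2 * Real.log (t + 1) ≤ νt) :
    (P {ω | (m : ℝ) * Real.sqrt (2 * νt / m) ≤ ∑ j ∈ Finset.range m, Y j ω}).toReal ≤
      (((t : ℝ) + 1)⁻¹) ^ 4 := by
  have hlog : 0 ≤ Real.log ((t : ℝ) + 1) := Real.log_nonneg (by
    have : (0:ℝ) ≤ (t:ℝ) := Nat.cast_nonneg t
    linarith)
  have hνt0 : 0 ≤ νt := le_trans (by positivity) hνt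
  have hmR : (0:ℝ) < m := by exact_mod_cast hm
  have harg : (0:ℝ) ≤ 2 * νt / m := by positivity
  have key := my_chernoff P Y γ0 hγ0 hind hYmeas hsub m (Real.sqrt (2 * νt / m))
    (Real.sqrt_nonneg _)
  refine key.trans ?_
  have hsq : Real.sqrt (2 * νt / m) ^ 2 = 2 * νt / m := Real.sq_sqrt harg
  rw [hsq]
  have hexp_eq : -((m:ℝ) * (2 * νt / m)) / (2 * γ0 ^ 2) = -(νt / γ0 ^ 2) := by
    field_simp
  rw [hexp_eq]
  have hγ02 : (0:ℝ) < γ0 ^ 2 := by positivity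
  have hstep : 4 * Real.log ((t:ℝ) + 1) ≤ νt / γ0 ^ 2 := by
    rw [le_div_iff₀ hγ02]
    calc 4 * Real.log ((t:ℝ) + 1) * γ0 ^ 2 ≤ 4 * γb ^ 2 * Real.log ((t:ℝ)+1) := by
          have h1 : γ0 ^ 2 ≤ γb ^ 2 := by nlinarith
          nlinarith
      _ ≤ νt := by
          have := hνt
          push_cast at this ⊢
          linarith
  calc Real.exp (-(νt / γ0 ^ 2)) ≤ Real.exp (-(4 * Real.log ((t:ℝ) + 1))) := by
        apply Real.exp_le_exp.mpr
        linarith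
    _ = (((t : ℝ) + 1)⁻¹) ^ 4 := by
        have ht1 : (0:ℝ) < (t:ℝ) + 1 := by positivity
        rw [show -(4 * Real.log ((t:ℝ)+1)) = (4:ℕ) * (-Real.log ((t:ℝ)+1)) by push_cast; ring,
          Real.exp_nat_mul, Real.exp_neg, Real.exp_log ht1]

set_option maxHeartbeats 1000000

theorem stmt_13
    {Ω : Type*} [MeasurableSpace Ω] (P : Measure Ω) [IsProbabilityMeasure P]
    (K : ℕ) (hK : 1 ≤ K)
    (μ γ : Fin K → ℝ) (kstar : Fin K) (γbar : ℝ)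
    (hγpos : ∀ k, 0 < γ k) (hγbar : ∀ k, γ k ≤ γbar)
    (hgap : ∀ k, k ≠ kstar → μ k < μ kstar)
    (X : Fin K → ℕ → Ω → ℝ)
    (hmeas : ∀ k j, Measurable (X k j))
    (hindep : iIndepFun (fun p : Fin K × ℕ => X p.1 p.2) P)
    (hident : ∀ k j, IdentDistrib (X k j) (X k 0) P P)
    (hint : ∀ k j, Integrable (X k j) P)
    (hmean : ∀ k, ∫ ω, X k 0 ω ∂P = μ k)
    (hsub : ∀ k j, ∀ lam : ℝ,
      ∫⁻ ω, ENNReal.ofReal (Real.exp (lam * (X k j ω - μ k))) ∂P ≤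
        ENNReal.ofReal (Real.exp (γ k ^ 2 * lam ^ 2 / 2)))
    (ν : ℕ → ℝ) (hνmono : Monotone ν)
    (T : ℕ → Fin K → Ω → ℕ) (I : ℕ → Ω → Fin K)
    (hTmeas : ∀ n k, Measurable (fun ω => T n k ω))
    (hImeas : ∀ n, Measurable (I n))
    (hinit : ∀ k ω, T K k ω = 1)
    (hTrec : ∀ n, K ≤ n → ∀ k ω,
      T (n + 1) k ω = T n k ω + if I (n + 1) ω = k then 1 else 0)
    (hargmax : ∀ n, K ≤ n → ∀ ω k,
      (∑ j ∈ Finset.range (T n k ω), X k j ω) / (T n k ω : ℝ) +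
          Real.sqrt (2 * ν (n + 1) / (T n k ω : ℝ)) ≤
        (∑ j ∈ Finset.range (T n (I (n + 1) ω) ω), X (I (n + 1) ω) j ω) /
            (T n (I (n + 1) ω) ω : ℝ) +
          Real.sqrt (2 * ν (n + 1) / (T n (I (n + 1) ω) ω : ℝ)))
    (hν : ∀ n : ℕ, 4 * γbar ^ 2 * Real.log n ≤ ν n) :
    ∀ k, k ≠ kstar → ∀ n, K ≤ n →
      (∫ ω, (T n k ω : ℝ) ∂P) ≤ 8 * ν n / (μ kstar - μ k) ^ 2 + 5 := by
  intro k hk n hn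
  classical
  have hγbpos : 0 < γbar := lt_of_lt_of_le (hγpos kstar) (hγbar kstar)
  have hΔ : 0 < μ kstar - μ k := sub_pos.mpr (hgap k hk)
  have hn1 : 1 ≤ n := le_trans hK hn
  have hνnn : ∀ t : ℕ, 1 ≤ t → 0 ≤ ν t := by
    intro t ht
    refine le_trans ?_ (hν t)
    have h1 : (1:ℝ) ≤ (t:ℝ) := by exact_mod_cast ht
    have : 0 ≤ Real.log (t:ℝ) := Real.log_nonneg h1
    positivity
  have hνn0 : 0 ≤ ν n := hνnn n hn1
  set u : ℕ := ⌊8 * ν n / (μ kstar - μ k) ^ 2⌋₊ + 1 with hudef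
  have hu1 : 1 ≤ u := Nat.le_add_left 1 _
  have huR : (u : ℝ) ≤ 8 * ν n / (μ kstar - μ k) ^ 2 + 1 := by
    have h0 : (0:ℝ) ≤ 8 * ν n / (μ kstar - μ k) ^ 2 := by positivity
    have := Nat.floor_le h0
    rw [hudef]
    push_cast
    linarith
  have hugt : 8 * ν n / (μ kstar - μ k) ^ 2 < (u : ℝ) := by
    have := Nat.lt_floor_add_one (8 * ν n / (μ kstar - μ k) ^ 2)
    rw [hudef]
    push_cast
    linarith
  have hupos : (0:ℝ) < (u:ℝ) := by exact_mod_cast hu1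
  -- bounds on T
  have hTb : ∀ t, K ≤ t → ∀ (j : Fin K) ω, 1 ≤ T t j ω ∧ T t j ω ≤ t := by
    intro t ht
    induction t, ht using Nat.le_induction with
    | base => intro j ω; rw [hinit]; exact ⟨le_refl 1, hK⟩
    | succ t ht ih =>
      intro j ω
      rw [hTrec t ht j ω]
      have h1 := (ih j ω).1
      have h2 := (ih j ω).2
      split <;> omega
  -- counting inequality
  have hcount : ∀ t, K ≤ t → ∀ ω,
      T t k ω ≤ u + ∑ s ∈ Finset.Ico K t,
        (if I (s+1) ω = k ∧ u ≤ T s k ω then 1 else 0) := by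
    intro t ht
    induction t, ht using Nat.le_induction with
    | base => intro ω; simp [hinit, hu1]
    | succ t ht ih =>
      intro ω
      rw [Finset.sum_Ico_succ_top ht, hTrec t ht k ω]
      have H := ih ω
      by_cases h1 : I (t+1) ω = k
      · by_cases h2 : u ≤ T t k ω
        · have e1 : (if I (t+1) ω = k ∧ u ≤ T t k ω then 1 else 0) = 1 := if_pos ⟨h1, h2⟩
          have e2 : (if I (t+1) ω = k then 1 else 0) = 1 := if_pos h1
          rw [e1, e2]; omega
        · have e1 : (if I (t+1) ω = k ∧ u ≤ T t k ω then 1 else 0) = 0 :=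
            if_neg (fun hc => h2 hc.2)
          have e2 : (if I (t+1) ω = k then 1 else 0) = 1 := if_pos h1
          rw [e1, e2]; omega
      · have e1 : (if I (t+1) ω = k ∧ u ≤ T t k ω then 1 else 0) = 0 :=
          if_neg (fun hc => h1 hc.1)
        have e2 : (if I (t+1) ω = k then 1 else 0) = 0 := if_neg h1
        rw [e1, e2]; omega
  -- bad events
  set Bad : ℕ → Set Ω := fun t => {ω | I (t+1) ω = k ∧ u ≤ T t k ω} with hBaddef
  have hBadmeas : ∀ t, MeasurableSet (Bad t) := by
    intro t
    have h1 : MeasurableSet {ω | I (t+1) ω = k} := hImeas (t+1) (measurableSet_singleton k)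
    have h2 : MeasurableSet {ω | u ≤ T t k ω} := hTmeas t k measurableSet_Ici
    have : Bad t = {ω | I (t+1) ω = k} ∩ {ω | u ≤ T t k ω} := by
      ext ω; simp [hBaddef, Set.mem_setOf_eq]
    rw [this]
    exact h1.inter h2
  -- integral bound via counting
  have hIndInt : ∀ t, Integrable (fun ω => Set.indicator (Bad t) (fun _ => (1:ℝ)) ω) P :=
    fun t => (integrable_const (1:ℝ)).indicator (hBadmeas t)
  have hmain1 : ∫ ω, (T n k ω : ℝ) ∂P ≤ (u:ℝ) + ∑ t ∈ Finset.Ico K n, (P (Bad t)).toReal := by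
    have hint2 : Integrable (fun ω => (u:ℝ) +
        ∑ t ∈ Finset.Ico K n, Set.indicator (Bad t) (fun _ => (1:ℝ)) ω) P := by
      exact (integrable_const _).add (integrable_finset_sum _ fun t _ => hIndInt t)
    have hpt : ∀ ω, (T n k ω : ℝ) ≤ (u:ℝ) +
        ∑ t ∈ Finset.Ico K n, Set.indicator (Bad t) (fun _ => (1:ℝ)) ω := by
      intro ω
      have H := hcount n hn ω
      have HR : ((T n k ω : ℕ) : ℝ) ≤ ((u + ∑ s ∈ Finset.Ico K n,
          (if I (s+1) ω = k ∧ u ≤ T s k ω then 1 else 0) : ℕ) : ℝ) := by exact_mod_cast H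
      refine HR.trans (le_of_eq ?_)
      push_cast
      congr 1
      refine Finset.sum_congr rfl fun t _ => ?_
      rw [Set.indicator_apply]
      by_cases hc : I (t+1) ω = k ∧ u ≤ T t k ω
      · rw [if_pos hc, if_pos (show ω ∈ Bad t from hc)]
      · rw [if_neg hc, if_neg (show ω ∉ Bad t from hc)]
    calc ∫ ω, (T n k ω : ℝ) ∂P
        ≤ ∫ ω, ((u:ℝ) + ∑ t ∈ Finset.Ico K n, Set.indicator (Bad t) (fun _ => (1:ℝ)) ω) ∂P :=
          integral_mono_of_nonneg (Filter.Eventually.of_forall fun ω => by positivity)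
            hint2 (Filter.Eventually.of_forall hpt)
      _ = (u:ℝ) + ∑ t ∈ Finset.Ico K n, (P (Bad t)).toReal := by
          rw [integral_add (integrable_const _) (integrable_finset_sum _ fun t _ => hIndInt t),
            integral_const, integral_finset_sum _ fun t _ => hIndInt t]
          simp only [probReal_univ, smul_eq_mul, one_mul]
          congr 1
          refine Finset.sum_congr rfl fun t _ => ?_
          rw [integral_indicator_const (1:ℝ) (hBadmeas t)]
          simp [measureReal_def]
  -- probability of bad events
  have hBadP : ∀ t ∈ Finset.Ico K n, (P (Bad t)).toReal ≤ 2 / ((t:ℝ) * ((t:ℝ)+1)) := by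
    intro t htmem
    rw [Finset.mem_Ico] at htmem
    obtain ⟨htK, htn⟩ := htmem
    have ht1 : 1 ≤ t := le_trans hK htK
    have htn' : t + 1 ≤ n := htn
    set A1 : ℕ → Set Ω := fun m => {ω | (m:ℝ) * Real.sqrt (2 * ν (t+1) / (m:ℝ)) ≤
        ∑ j ∈ Finset.range m, (μ kstar - X kstar j ω)} with hA1def
    set A2 : ℕ → Set Ω := fun m => {ω | (m:ℝ) * Real.sqrt (2 * ν (t+1) / (m:ℝ)) ≤
        ∑ j ∈ Finset.range m, (X k j ω - μ k)} with hA2def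
    -- inclusion
    have hincl : Bad t ⊆ (⋃ m ∈ Finset.Icc 1 t, A1 m) ∪ (⋃ m ∈ Finset.Icc 1 t, A2 m) := by
      intro ω hω
      have hI : I (t+1) ω = k := hω.1
      have hub : u ≤ T t k ω := hω.2
      by_contra hnot
      rw [Set.mem_union] at hnot
      push_neg at hnot
      obtain ⟨hu1', hu2'⟩ := hnot
      simp only [Set.mem_iUnion, not_exists] at hu1' hu2'
      obtain ⟨ha1, hat⟩ := hTb t htK kstar ω
      obtain ⟨hb1, hbt⟩ := hTb t htK k ω
      have haP : (0:ℝ) < (T t kstar ω : ℝ) := by exact_mod_cast ha1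
      have hbP : (0:ℝ) < (T t k ω : ℝ) := by exact_mod_cast hb1
      have hA1a := hu1' (T t kstar ω) (Finset.mem_Icc.mpr ⟨ha1, hat⟩)
      have hA2b := hu2' (T t k ω) (Finset.mem_Icc.mpr ⟨hb1, hbt⟩)
      rw [hA1def, Set.mem_setOf_eq, not_le] at hA1a
      rw [hA2def, Set.mem_setOf_eq, not_le] at hA2b
      have hsum1 : ∑ j ∈ Finset.range (T t kstar ω), (μ kstar - X kstar j ω) =
          (T t kstar ω : ℝ) * μ kstar - ∑ j ∈ Finset.range (T t kstar ω), X kstar j ω := by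
        rw [Finset.sum_sub_distrib, Finset.sum_const, Finset.card_range, nsmul_eq_mul]
      have hsum2 : ∑ j ∈ Finset.range (T t k ω), (X k j ω - μ k) =
          (∑ j ∈ Finset.range (T t k ω), X k j ω) - (T t k ω : ℝ) * μ k := by
        rw [Finset.sum_sub_distrib, Finset.sum_const, Finset.card_range, nsmul_eq_mul]
      rw [hsum1] at hA1a
      rw [hsum2] at hA2b
      have hSa : (T t kstar ω : ℝ) * ((∑ j ∈ Finset.range (T t kstar ω), X kstar j ω) /
          (T t kstar ω : ℝ)) = ∑ j ∈ Finset.range (T t kstar ω), X kstar j ω := by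
        field_simp
      have hSb : (T t k ω : ℝ) * ((∑ j ∈ Finset.range (T t k ω), X k j ω) /
          (T t k ω : ℝ)) = ∑ j ∈ Finset.range (T t k ω), X k j ω := by
        field_simp
      have h1' : μ kstar < (∑ j ∈ Finset.range (T t kstar ω), X kstar j ω) / (T t kstar ω : ℝ) +
          Real.sqrt (2 * ν (t+1) / (T t kstar ω : ℝ)) := by
        have key : (T t kstar ω : ℝ) * μ kstar < (T t kstar ω : ℝ) *
            ((∑ j ∈ Finset.range (T t kstar ω), X kstar j ω) / (T t kstar ω : ℝ) +
              Real.sqrt (2 * ν (t+1) / (T t kstar ω : ℝ))) := by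
          rw [mul_add, hSa]
          linarith
        exact lt_of_mul_lt_mul_left key haP.le
      have h2' : (∑ j ∈ Finset.range (T t k ω), X k j ω) / (T t k ω : ℝ) < μ k +
          Real.sqrt (2 * ν (t+1) / (T t k ω : ℝ)) := by
        have key : (T t k ω : ℝ) * ((∑ j ∈ Finset.range (T t k ω), X k j ω) / (T t k ω : ℝ)) <
            (T t k ω : ℝ) * (μ k + Real.sqrt (2 * ν (t+1) / (T t k ω : ℝ))) := by
          rw [hSb, mul_add]
          linarith
        exact lt_of_mul_lt_mul_left key hbP.le
      have harg := hargmax t htK ω kstar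
      rw [hI] at harg
      have hνt1 : 0 ≤ ν (t+1) := hνnn (t+1) (by omega)
      have hνt1n : ν (t+1) ≤ ν n := hνmono htn'
      have hεb : Real.sqrt (2 * ν (t+1) / (T t k ω : ℝ)) < (μ kstar - μ k) / 2 := by
        have hub' : (u:ℝ) ≤ (T t k ω : ℝ) := by exact_mod_cast hub
        have h2ν : 2 * ν (t+1) / (T t k ω : ℝ) ≤ 2 * ν n / (u:ℝ) := by
          calc 2 * ν (t+1) / (T t k ω : ℝ) ≤ 2 * ν (t+1) / (u:ℝ) := by
                apply div_le_div_of_nonneg_left (by linarith) hupos hub'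
            _ ≤ 2 * ν n / (u:ℝ) := (div_le_div_iff_of_pos_right hupos).mpr (by linarith)
        have hlt : 2 * ν n / (u:ℝ) < ((μ kstar - μ k) / 2) ^ 2 := by
          have h8 : 8 * ν n < (u:ℝ) * (μ kstar - μ k) ^ 2 :=
            (div_lt_iff₀ (by positivity)).mp hugt
          rw [div_lt_iff₀ hupos]
          nlinarith
        calc Real.sqrt (2 * ν (t+1) / (T t k ω : ℝ)) ≤ Real.sqrt (2 * ν n / (u:ℝ)) :=
              Real.sqrt_le_sqrt h2ν
          _ < (μ kstar - μ k) / 2 := by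
              rw [show (μ kstar - μ k) / 2 = Real.sqrt (((μ kstar - μ k) / 2) ^ 2) from
                (Real.sqrt_sq (by positivity)).symm]
              exact Real.sqrt_lt_sqrt (by positivity) hlt
        done
      linarith
    -- chernoff bounds
    have hν4 : 4 * γbar ^ 2 * Real.log ((t:ℝ) + 1) ≤ ν (t + 1) := by
      have := hν (t+1)
      push_cast at this
      linarith
    have hP1 : ∀ m ∈ Finset.Icc 1 t, (P (A1 m)).toReal ≤ (((t:ℝ)+1)⁻¹) ^ 4 := by
      intro m hm
      rw [Finset.mem_Icc] at hm
      have hindY : iIndepFun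
          (fun (j : ℕ) (ω : Ω) => μ kstar - X kstar j ω) P := by
        have base := my_precomp hindep (fun j : ℕ => ((kstar, j) : Fin K × ℕ))
          (fun x y hxy => by simpa using congrArg Prod.snd hxy)
        exact base.comp (fun _ => fun x : ℝ => μ kstar - x)
          (fun _ => measurable_const.sub measurable_id)
      have hsubY : ∀ j, ∀ lam : ℝ,
          ∫⁻ ω, ENNReal.ofReal (Real.exp (lam * (μ kstar - X kstar j ω))) ∂P ≤
            ENNReal.ofReal (Real.exp (γ kstar ^ 2 * lam ^ 2 / 2)) := by
        intro j lam
        calc ∫⁻ ω, ENNReal.ofReal (Real.exp (lam * (μ kstar - X kstar j ω))) ∂P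
            = ∫⁻ ω, ENNReal.ofReal (Real.exp ((-lam) * (X kstar j ω - μ kstar))) ∂P := by
              refine lintegral_congr fun ω => ?_
              congr 2
              ring
          _ ≤ ENNReal.ofReal (Real.exp (γ kstar ^ 2 * (-lam) ^ 2 / 2)) := hsub kstar j (-lam)
          _ = ENNReal.ofReal (Real.exp (γ kstar ^ 2 * lam ^ 2 / 2)) := by rw [neg_sq]
      exact my_dev P (fun j ω => μ kstar - X kstar j ω) (γ kstar) γbar (hγpos kstar)
        (hγbar kstar) hindY (fun j => measurable_const.sub (hmeas kstar j)) hsubY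
        m t hm.1 (ν (t+1)) hν4
    have hP2 : ∀ m ∈ Finset.Icc 1 t, (P (A2 m)).toReal ≤ (((t:ℝ)+1)⁻¹) ^ 4 := by
      intro m hm
      rw [Finset.mem_Icc] at hm
      have hindY : iIndepFun
          (fun (j : ℕ) (ω : Ω) => X k j ω - μ k) P := by
        have base := my_precomp hindep (fun j : ℕ => ((k, j) : Fin K × ℕ))
          (fun x y hxy => by simpa using congrArg Prod.snd hxy)
        exact base.comp (fun _ => fun x : ℝ => x - μ k)
          (fun _ => measurable_id.sub measurable_const)
      exact my_dev P (fun j ω => X k j ω - μ k) (γ k) γbar (hγpos k)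
        (hγbar k) hindY (fun j => (hmeas k j).sub measurable_const) (hsub k)
        m t hm.1 (ν (t+1)) hν4
    -- union bound
    have hsumfin : ∀ m ∈ Finset.Icc 1 t, P (A1 m) + P (A2 m) ≠ ⊤ :=
      fun m _ => ENNReal.add_ne_top.mpr ⟨measure_ne_top P _, measure_ne_top P _⟩
    have hUnion : (P (Bad t)).toReal ≤
        ∑ m ∈ Finset.Icc 1 t, ((P (A1 m)).toReal + (P (A2 m)).toReal) := by
      have h1 : P (Bad t) ≤ ∑ m ∈ Finset.Icc 1 t, (P (A1 m) + P (A2 m)) := by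
        calc P (Bad t) ≤ P ((⋃ m ∈ Finset.Icc 1 t, A1 m) ∪ (⋃ m ∈ Finset.Icc 1 t, A2 m)) :=
              measure_mono hincl
          _ ≤ P (⋃ m ∈ Finset.Icc 1 t, A1 m) + P (⋃ m ∈ Finset.Icc 1 t, A2 m) :=
              measure_union_le _ _
          _ ≤ (∑ m ∈ Finset.Icc 1 t, P (A1 m)) + ∑ m ∈ Finset.Icc 1 t, P (A2 m) :=
              add_le_add (measure_biUnion_finset_le _ _) (measure_biUnion_finset_le _ _)
          _ = ∑ m ∈ Finset.Icc 1 t, (P (A1 m) + P (A2 m)) := Finset.sum_add_distrib.symm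
      have hne : (∑ m ∈ Finset.Icc 1 t, (P (A1 m) + P (A2 m))) ≠ ⊤ :=
        (ENNReal.sum_lt_top.mpr (fun m hm => lt_top_iff_ne_top.mpr (hsumfin m hm))).ne
      have h2 := ENNReal.toReal_mono hne h1
      refine h2.trans (le_of_eq ?_)
      rw [ENNReal.toReal_sum hsumfin]
      exact Finset.sum_congr rfl fun m _ =>
        ENNReal.toReal_add (measure_ne_top P _) (measure_ne_top P _)
    have htR : (1:ℝ) ≤ (t:ℝ) := by exact_mod_cast ht1
    calc (P (Bad t)).toReal
        ≤ ∑ m ∈ Finset.Icc 1 t, ((P (A1 m)).toReal + (P (A2 m)).toReal) := hUnion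
      _ ≤ ∑ _m ∈ Finset.Icc 1 t, ((((t:ℝ)+1)⁻¹) ^ 4 + (((t:ℝ)+1)⁻¹) ^ 4) :=
          Finset.sum_le_sum fun m hm => add_le_add (hP1 m hm) (hP2 m hm)
      _ = (t:ℝ) * ((((t:ℝ)+1)⁻¹) ^ 4 + (((t:ℝ)+1)⁻¹) ^ 4) := by
          rw [Finset.sum_const, Nat.card_Icc]
          simp only [nsmul_eq_mul]
          push_cast
          ring
      _ ≤ 2 / ((t:ℝ) * ((t:ℝ)+1)) := by
          have h1 : (0:ℝ) < (t:ℝ) := by linarith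
          have h2 : (0:ℝ) < (t:ℝ) + 1 := by linarith
          have heq : (t:ℝ) * ((((t:ℝ)+1)⁻¹) ^ 4 + (((t:ℝ)+1)⁻¹) ^ 4) =
              2 * (t:ℝ) / (((t:ℝ)+1) ^ 4) := by
            rw [inv_pow, div_eq_mul_inv]
            ring
          rw [heq, div_le_div_iff₀ (by positivity) (by positivity)]
          have e1 : (t:ℝ)^2 ≤ ((t:ℝ)+1)^2 := by nlinarith
          have e2 : ((t:ℝ)+1) ≤ ((t:ℝ)+1)^2 := by nlinarith
          nlinarith [e1, e2]
  -- telescoping sum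
  have hsumtel : ∑ t ∈ Finset.Ico K n, 2 / ((t:ℝ) * ((t:ℝ)+1)) ≤ 2 := by
    have key : ∀ m, K ≤ m → ∑ t ∈ Finset.Ico K m, 2 / ((t:ℝ) * ((t:ℝ)+1)) =
        2 / (K:ℝ) - 2 / (m:ℝ) := by
      intro m hm
      induction m, hm using Nat.le_induction with
      | base => simp
      | succ m hm ih =>
        rw [Finset.sum_Ico_succ_top hm, ih]
        have hm1 : (1:ℝ) ≤ (m:ℝ) := by exact_mod_cast le_trans hK hm
        have h0 : (0:ℝ) < (m:ℝ) := by linarith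
        push_cast
        field_simp
        ring
    rw [key n hn]
    have h1 : 0 ≤ 2 / (n:ℝ) := by positivity
    have hK1 : (1:ℝ) ≤ (K:ℝ) := by exact_mod_cast hK
    have h2 : 2 / (K:ℝ) ≤ 2 := by
      rw [div_le_iff₀ (by linarith)]
      linarith
    linarith
  -- final assembly
  calc ∫ ω, (T n k ω : ℝ) ∂P
      ≤ (u:ℝ) + ∑ t ∈ Finset.Ico K n, (P (Bad t)).toReal := hmain1
    _ ≤ (u:ℝ) + ∑ t ∈ Finset.Ico K n, 2 / ((t:ℝ) * ((t:ℝ)+1)) :=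
        add_le_add_right (Finset.sum_le_sum hBadP) _
    _ ≤ (8 * ν n / (μ kstar - μ k) ^ 2 + 1) + 2 := add_le_add huR hsumtel
    _ ≤ 8 * ν n / (μ kstar - μ k) ^ 2 + 5 := by linarith
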